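/- arXiv:1110.4355 — 2 statements merged into one kernel-verified Lean document; each statement's English description precedes it below -/
import Mathlib

section
/- Fix L ≥ 2 targets indexed by l ∈ {1,…,L} with a distinguished index a, and for each l fix real matrices F_l, Q_l (m×m, Q_l symmetric positive definite), H_l (p×m), R_l (p×p, symmetric positive definite), a detection probability p_l ∈ [0,1], nonnegative constants α_l, β_l ≥ 0, and a constant c ∈ ℝ. For an m×m symmetric positive definite matrix P and b ∈ {0,1}, define Φ_l(P,b) = F_l P F_lᵀ + Q_l − b · F_l P H_lᵀ (H_l P H_lᵀ + R_l)⁻¹ H_l P F_lᵀ and L_l(P) = F_l P F_lᵀ + Q_l. For a state (P, P̄) consisting of two L-tuples of m×m symmetric positive definite matrices and a detection pattern b ∈ {0,1}^L with probability weight q(b) = ∏_l (p_l if b_l = 1 else 1 − p_l), let T(P, P̄, b) be the state with components (Φ_l(P_l, b_l), L_l(P̄_l)). Define the stopping cost C̄(P, P̄) = −α_a log det P̄_a + β_a log det P_a + Σ_{l≠a} (α_l log det P̄_l − β_l log det P_l) and C(P, P̄) = c − C̄(P, P̄) + Σ_{b∈{0,1}^L} q(b) · C̄(T(P, P̄, b)).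 Then C is monotone in the following sense with respect to the Loewner order (all other components held fixed): C is decreasing in P_a, decreasing in P̄_l for every l ≠ a, increasing in P_l for every l ≠ a, and increasing in P̄_a. -/
open Matrix

/-- Riccati/Lyapunov covariance update for one target: with a received measurement
(`b = true`) this is the Riccati update, otherwise the Lyapunov (predictor) update. -/
noncomputable def kalmanUpdate {m p : ℕ}
    (F Q : Matrix (Fin m) (Fin m) ℝ) (H : Matrix (Fin p) (Fin m) ℝ)
    (R : Matrix (Fin p) (Fin p) ℝ) (P : Matrix (Fin m) (Fin m) ℝ) (b : Bool) :
    Matrix (Fin m) (Fin m) ℝ :=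
  F * P * Fᵀ + Q - if b then F * P * Hᵀ * (H * P * Hᵀ + R)⁻¹ * H * P * Fᵀ else 0

/-- Lyapunov (measurement-free predictor) covariance update. -/
noncomputable def lyapUpdate {m : ℕ}
    (F Q P : Matrix (Fin m) (Fin m) ℝ) : Matrix (Fin m) (Fin m) ℝ :=
  F * P * Fᵀ + Q

/-- Probability weight of a detection pattern `b : Fin L → Bool`. -/
noncomputable def detWeight {L : ℕ} (pd : Fin L → ℝ) (b : Fin L → Bool) : ℝ :=
  ∏ l, if b l then pd l else 1 - pd l

/-- Stopping cost `C̄(P, P̄)` (mutual-information based stochastic observability cost). -/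
noncomputable def stopCost {L m : ℕ} (a : Fin L) (α β : Fin L → ℝ)
    (P Pbar : Fin L → Matrix (Fin m) (Fin m) ℝ) : ℝ :=
  - α a * Real.log (Pbar a).det + β a * Real.log (P a).det
    + ∑ l ∈ Finset.univ.erase a,
        (α l * Real.log (Pbar l).det - β l * Real.log (P l).det)

/-- The one-step continuation cost
`C(P, P̄) = c − C̄(P, P̄) + Σ_b q(b) C̄(T(P, P̄, b))`. -/
noncomputable def contCost {L m p : ℕ} (a : Fin L) (α β : Fin L → ℝ) (c : ℝ)
    (F Q : Fin L → Matrix (Fin m) (Fin m) ℝ)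
    (H : Fin L → Matrix (Fin p) (Fin m) ℝ)
    (R : Fin L → Matrix (Fin p) (Fin p) ℝ) (pd : Fin L → ℝ)
    (P Pbar : Fin L → Matrix (Fin m) (Fin m) ℝ) : ℝ :=
  c - stopCost a α β P Pbar
    + ∑ b : Fin L → Bool,
        detWeight pd b *
          stopCost a α β
            (fun l => kalmanUpdate (F l) (Q l) (H l) (R l) (P l) (b l))
            (fun l => lyapUpdate (F l) (Q l) (Pbar l))

set_option linter.unusedSectionVars false

variable {n : Type*} [Fintype n] [DecidableEq n]

lemma herm_tr {A : Matrix n n ℝ} (h : A.IsHermitian) : Aᵀ = A := by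
  rw [← Matrix.conjTranspose_eq_transpose_of_trivial]; exact h

lemma psd_conj {k : Type*} [Fintype k] {A : Matrix n n ℝ} (hA : A.PosSemidef)
    (B : Matrix k n ℝ) : (B * A * Bᵀ).PosSemidef := by
  simpa [Matrix.conjTranspose_eq_transpose_of_trivial] using hA.mul_mul_conjTranspose_same B

lemma psd_sqrt {A : Matrix n n ℝ} (hA : A.PosSemidef) :
    ∃ C : Matrix n n ℝ, C.PosSemidef ∧ C * C = A := by
  open scoped MatrixOrder in
  exact ⟨CFC.sqrt A, (CFC.sqrt_nonneg A).posSemidef, CFC.sqrt_mul_sqrt_self A hA.nonneg⟩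

lemma one_le_det_one_add {N : Matrix n n ℝ} (hN : N.PosSemidef) : 1 ≤ (1 + N).det := by
  have h1 : ((1 : Matrix n n ℝ) + N).PosSemidef := Matrix.PosSemidef.add Matrix.PosSemidef.one hN
  have hH := h1.1
  have hev : ∀ i, 1 ≤ hH.eigenvalues i := by
    intro i
    have hvnorm : ‖hH.eigenvectorBasis i‖ = 1 := hH.eigenvectorBasis.orthonormal.1 i
    rw [EuclideanSpace.norm_eq] at hvnorm
    have hsq : ∑ j, (hH.eigenvectorBasis i j)^2 = 1 := by
      have h0 : (0:ℝ) ≤ ∑ j, ‖hH.eigenvectorBasis i j‖ ^ 2 :=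
        Finset.sum_nonneg fun _ _ => sq_nonneg _
      have := Real.sqrt_eq_one.mp hvnorm
      simpa [Real.norm_eq_abs, sq_abs] using this
    have hv2 : (⇑(hH.eigenvectorBasis i)) ⬝ᵥ (⇑(hH.eigenvectorBasis i)) = 1 := by
      simpa [dotProduct, ← sq] using hsq
    have heq := hH.eigenvalues_eq i
    have hnn := hN.dotProduct_mulVec_nonneg (⇑(hH.eigenvectorBasis i))
    simp only [star_trivial] at hnn heq
    rw [heq]
    simp only [add_mulVec, one_mulVec, dotProduct_add, hv2, RCLike.re_to_real]
    linarith [hnn]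
  have hdet := hH.det_eq_prod_eigenvalues
  rw [hdet]
  have h1le : (1:ℝ) ≤ ∏ i, hH.eigenvalues i := by
    calc (1:ℝ) = ∏ _i : n, 1 := by simp
    _ ≤ ∏ i, hH.eigenvalues i :=
      Finset.prod_le_prod (fun i _ => zero_le_one) (fun i _ => hev i)
  simpa using h1le

lemma det_mono {A B : Matrix n n ℝ} (hA : A.PosDef) (h : (B - A).PosSemidef) :
    A.det ≤ B.det := by
  obtain ⟨C, hCpsd, hCC⟩ := psd_sqrt hA.posSemidef
  have hdetA : 0 < A.det := hA.det_pos
  have hdetC : C.det ≠ 0 := by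
    intro h0
    rw [← hCC, det_mul, h0, mul_zero] at hdetA
    exact lt_irrefl _ hdetA
  have hCu : IsUnit C.det := isUnit_iff_ne_zero.mpr hdetC
  have hCsymm : Cᵀ = C := herm_tr hCpsd.1
  have hCinvsymm : (C⁻¹)ᵀ = C⁻¹ := by rw [transpose_nonsing_inv, hCsymm]
  have hMpsd : (C⁻¹ * (B - A) * C⁻¹).PosSemidef := by
    have := psd_conj h C⁻¹
    rwa [hCinvsymm] at this
  have key : B = C * (1 + C⁻¹ * (B - A) * C⁻¹) * C := by
    have e1 : C * (1 + C⁻¹ * (B - A) * C⁻¹) * C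
        = C * C + (C * C⁻¹) * (B - A) * (C⁻¹ * C) := by noncomm_ring
    rw [e1, Matrix.mul_nonsing_inv _ hCu, Matrix.nonsing_inv_mul _ hCu, one_mul, mul_one, hCC]
    abel
  calc A.det = A.det * 1 := (mul_one _).symm
  _ ≤ A.det * (1 + C⁻¹ * (B - A) * C⁻¹).det := by
      exact mul_le_mul_of_nonneg_left (one_le_det_one_add hMpsd) hdetA.le
  _ = B.det := by
      have hCCdet : C.det * C.det = A.det := by rw [← det_mul, hCC]
      conv_rhs => rw [key]
      rw [det_mul, det_mul, ← hCCdet]; ring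

lemma inv_antitone {P X : Matrix n n ℝ} (hP : P.PosDef) (hX : X.PosDef)
    (h : (X - P).PosSemidef) : (P⁻¹ - X⁻¹).PosSemidef := by
  have hPu : IsUnit P.det := isUnit_iff_ne_zero.mpr hP.det_pos.ne'
  have hXu : IsUnit X.det := isUnit_iff_ne_zero.mpr hX.det_pos.ne'
  refine .of_dotProduct_mulVec_nonneg (hP.inv.1.sub hX.inv.1) fun x => ?_
  set u := X⁻¹ *ᵥ x with hu
  set w := P⁻¹ *ᵥ x with hw
  have hXu' : X *ᵥ u = x := by
    rw [hu, mulVec_mulVec, Matrix.mul_nonsing_inv _ hXu, one_mulVec]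
  have hPw : P *ᵥ w = x := by
    rw [hw, mulVec_mulVec, Matrix.mul_nonsing_inv _ hPu, one_mulVec]
  have hPsymm : Pᵀ = P := herm_tr hP.1
  have expand : x ⬝ᵥ (P⁻¹ - X⁻¹) *ᵥ x
      = (u - w) ⬝ᵥ P *ᵥ (u - w) + u ⬝ᵥ (X - P) *ᵥ u := by
    have t1 : u ⬝ᵥ X *ᵥ u = x ⬝ᵥ u := by rw [hXu']; exact dotProduct_comm _ _
    have t2 : u ⬝ᵥ P *ᵥ w = u ⬝ᵥ x := by rw [hPw]
    have t3 : w ⬝ᵥ P *ᵥ u = x ⬝ᵥ u := by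
      rw [dotProduct_mulVec, ← mulVec_transpose, hPsymm, hPw]
    have t4 : w ⬝ᵥ P *ᵥ w = w ⬝ᵥ x := by rw [hPw]
    have t5 : u ⬝ᵥ x = x ⬝ᵥ u := dotProduct_comm _ _
    have t6 : w ⬝ᵥ x = x ⬝ᵥ w := dotProduct_comm _ _
    simp only [sub_mulVec, mulVec_sub, dotProduct_sub, sub_dotProduct]
    rw [t1, t2, t3, t4]
    rw [t5, t6]
    ring
  have h1 := hP.posSemidef.dotProduct_mulVec_nonneg (u - w)
  have h2 := h.dotProduct_mulVec_nonneg u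
  simp only [star_trivial] at h1 h2 ⊢
  rw [expand]
  exact add_nonneg h1 h2

lemma det_lyap {F Q P : Matrix n n ℝ} (hQ : Q.PosDef) (hP : P.PosDef) :
    (F * P * Fᵀ + Q).det = Q.det * ((P⁻¹ + Fᵀ * Q⁻¹ * F).det * P.det) := by
  have hQu : IsUnit Q.det := isUnit_iff_ne_zero.mpr hQ.det_pos.ne'
  have hPu : IsUnit P.det := isUnit_iff_ne_zero.mpr hP.det_pos.ne'
  have e1 : F * P * Fᵀ + Q = (1 + F * P * Fᵀ * Q⁻¹) * Q := by
    rw [add_mul, one_mul, mul_assoc (F * P * Fᵀ), Matrix.nonsing_inv_mul _ hQu, mul_one,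
      add_comm]
  have e2 : (P⁻¹ + Fᵀ * Q⁻¹ * F) * P = 1 + Fᵀ * Q⁻¹ * F * P := by
    rw [add_mul, Matrix.nonsing_inv_mul _ hPu]
  have d2 : (P⁻¹ + Fᵀ * Q⁻¹ * F).det * P.det = (1 + Fᵀ * Q⁻¹ * F * P).det := by
    rw [← det_mul, e2]
  have c1 : (1 + Fᵀ * (Q⁻¹ * F * P)).det = (1 + Q⁻¹ * F * P * Fᵀ).det := by
    rw [det_one_add_mul_comm]
  have c2 : (1 + (F * P * Fᵀ) * Q⁻¹).det = (1 + Q⁻¹ * (F * P * Fᵀ)).det := by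
    rw [det_one_add_mul_comm]
  rw [e1, det_mul, d2]
  rw [show Fᵀ * Q⁻¹ * F * P = Fᵀ * (Q⁻¹ * F * P) by simp [mul_assoc], c1]
  rw [show F * P * Fᵀ * Q⁻¹ = (F * P * Fᵀ) * Q⁻¹ by simp [mul_assoc], c2]
  rw [show Q⁻¹ * (F * P * Fᵀ) = Q⁻¹ * F * P * Fᵀ by simp [mul_assoc]]
  ring

lemma S_eq {q : Type*} [Fintype q] [DecidableEq q] {P : Matrix n n ℝ}
    {H : Matrix q n ℝ} {R : Matrix q q ℝ} (hP : P.PosDef) (hR : R.PosDef) :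
    (P⁻¹ + Hᵀ * (R⁻¹ * H))⁻¹ = P - P * Hᵀ * (H * P * Hᵀ + R)⁻¹ * (H * P) := by
  have hPu : IsUnit P.det := isUnit_iff_ne_zero.mpr hP.det_pos.ne'
  have hRu : IsUnit R.det := isUnit_iff_ne_zero.mpr hR.det_pos.ne'
  have hM : (H * P * Hᵀ + R).PosDef :=
    Matrix.PosDef.posSemidef_add (psd_conj hP.posSemidef H) hR
  have hMu : IsUnit (H * P * Hᵀ + R).det := isUnit_iff_ne_zero.mpr hM.det_pos.ne'
  set K := (H * P * Hᵀ + R)⁻¹ with hK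
  have h1 : P * P⁻¹ = 1 := Matrix.mul_nonsing_inv _ hPu
  have h2 : R * (R⁻¹ * H) = H := by
    rw [← Matrix.mul_assoc, Matrix.mul_nonsing_inv _ hRu, Matrix.one_mul]
  have hKM : K * (H * P * Hᵀ) + K * R = 1 := by
    have := Matrix.nonsing_inv_mul _ hMu
    rw [← hK] at this
    rw [← Matrix.mul_add, this]
  have h3 : K * (H * (P * Hᵀ)) = 1 - K * R := by
    have := eq_sub_of_add_eq hKM
    rw [Matrix.mul_assoc] at this
    exact this
  have hBD : K * (H * (P * (Hᵀ * (R⁻¹ * H)))) = R⁻¹ * H - K * H := by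
    have e : K * (H * (P * (Hᵀ * (R⁻¹ * H)))) = (K * (H * (P * Hᵀ))) * (R⁻¹ * H) := by
      simp only [Matrix.mul_assoc]
    rw [e, h3, Matrix.sub_mul, Matrix.one_mul, Matrix.mul_assoc, h2]
  have main : (P - P * Hᵀ * K * (H * P)) * (P⁻¹ + Hᵀ * (R⁻¹ * H)) = 1 := by
    simp only [Matrix.sub_mul, Matrix.mul_add, Matrix.mul_sub, Matrix.mul_assoc]
    simp only [h1]
    simp only [Matrix.mul_one, hBD, Matrix.mul_sub]
    abel
  exact Matrix.inv_eq_left_inv main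

lemma det_kalman_true {q : Type*} [Fintype q] [DecidableEq q]
    {F Q P : Matrix n n ℝ} {H : Matrix q n ℝ} {R : Matrix q q ℝ}
    (hQ : Q.PosDef) (hP : P.PosDef) (hR : R.PosDef) :
    (F * P * Fᵀ + Q - F * P * Hᵀ * (H * P * Hᵀ + R)⁻¹ * H * P * Fᵀ).det
        * (P⁻¹ + Hᵀ * (R⁻¹ * H)).det
      = Q.det * (P⁻¹ + Hᵀ * (R⁻¹ * H) + Fᵀ * Q⁻¹ * F).det := by
  have hJ : (Hᵀ * (R⁻¹ * H)).PosSemidef := by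
    have := psd_conj hR.inv.posSemidef Hᵀ
    rwa [transpose_transpose, Matrix.mul_assoc] at this
  have hJm : (P⁻¹ + Hᵀ * (R⁻¹ * H)).PosDef := hP.inv.add_posSemidef hJ
  have hJmu : IsUnit (P⁻¹ + Hᵀ * (R⁻¹ * H)).det := isUnit_iff_ne_zero.mpr hJm.det_pos.ne'
  set S := (P⁻¹ + Hᵀ * (R⁻¹ * H))⁻¹ with hSdef
  have hSpos : S.PosDef := hJm.inv
  have hkal : F * P * Fᵀ + Q - F * P * Hᵀ * (H * P * Hᵀ + R)⁻¹ * H * P * Fᵀ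
      = F * S * Fᵀ + Q := by
    rw [hSdef, S_eq hP hR]
    simp only [Matrix.mul_sub, Matrix.sub_mul, Matrix.mul_assoc]
    abel
  have hSinv : S⁻¹ = P⁻¹ + Hᵀ * (R⁻¹ * H) := by
    rw [hSdef, Matrix.nonsing_inv_nonsing_inv _ hJmu]
  have hdetS : S.det * (P⁻¹ + Hᵀ * (R⁻¹ * H)).det = 1 := by
    rw [← det_mul, hSdef, Matrix.nonsing_inv_mul _ hJmu, det_one]
  rw [hkal, det_lyap hQ hSpos, hSinv]
  ring_nf
  rw [mul_assoc, hdetS, mul_one]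

lemma psd_if {m p : ℕ} {H : Matrix (Fin p) (Fin m) ℝ} {R : Matrix (Fin p) (Fin p) ℝ}
    (hR : R.PosDef) (b : Bool) :
    ((if b then Hᵀ * (R⁻¹ * H) else 0 : Matrix (Fin m) (Fin m) ℝ)).PosSemidef := by
  cases b
  · simpa using (Matrix.PosSemidef.zero : (0 : Matrix (Fin m) (Fin m) ℝ).PosSemidef)
  · have := psd_conj hR.inv.posSemidef Hᵀ
    rw [transpose_transpose, Matrix.mul_assoc] at this
    simpa using this

lemma psd_G {m : ℕ} {F Q : Matrix (Fin m) (Fin m) ℝ} (hQ : Q.PosDef) :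
    (Fᵀ * Q⁻¹ * F).PosSemidef := by
  have := hQ.inv.posSemidef.conjTranspose_mul_mul_same F
  simpa [Matrix.conjTranspose_eq_transpose_of_trivial] using this

lemma logdet_kalman {m p : ℕ} {F Q : Matrix (Fin m) (Fin m) ℝ}
    {H : Matrix (Fin p) (Fin m) ℝ} {R : Matrix (Fin p) (Fin p) ℝ}
    (hQ : Q.PosDef) (hR : R.PosDef) {P : Matrix (Fin m) (Fin m) ℝ} (hP : P.PosDef) (b : Bool) :
    Real.log (kalmanUpdate F Q H R P b).det
      = Real.log Q.det
        + Real.log ((P⁻¹ + (if b then Hᵀ * (R⁻¹ * H) else 0) + Fᵀ * Q⁻¹ * F).det)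
        - Real.log ((P⁻¹ + (if b then Hᵀ * (R⁻¹ * H) else 0)).det) := by
  set J := (if b then Hᵀ * (R⁻¹ * H) else 0 : Matrix (Fin m) (Fin m) ℝ) with hJdef
  have hJ : J.PosSemidef := psd_if hR b
  have hPJ : (P⁻¹ + J).PosDef := hP.inv.add_posSemidef hJ
  have hPJG : (P⁻¹ + J + Fᵀ * Q⁻¹ * F).PosDef := hPJ.add_posSemidef (psd_G hQ)
  have prodEq : (kalmanUpdate F Q H R P b).det * (P⁻¹ + J).det
      = Q.det * (P⁻¹ + J + Fᵀ * Q⁻¹ * F).det := by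
    cases b
    · have hPu : IsUnit P.det := isUnit_iff_ne_zero.mpr hP.det_pos.ne'
      have hPPinv : P⁻¹.det * P.det = 1 := by
        rw [← det_mul, Matrix.nonsing_inv_mul _ hPu, det_one]
      simp only [hJdef, kalmanUpdate, Bool.false_eq_true, if_false, sub_zero, add_zero]
      rw [det_lyap hQ hP]
      linear_combination Q.det * (P⁻¹ + Fᵀ * Q⁻¹ * F).det * hPPinv
    · simp only [hJdef, kalmanUpdate, if_true]
      exact det_kalman_true hQ hP hR
  have hkalpos : 0 < (kalmanUpdate F Q H R P b).det := by
    nlinarith [hPJ.det_pos, mul_pos hQ.det_pos hPJG.det_pos, prodEq]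
  have hlog := congrArg Real.log prodEq
  rw [Real.log_mul hkalpos.ne' hPJ.det_pos.ne',
    Real.log_mul hQ.det_pos.ne' hPJG.det_pos.ne'] at hlog
  linarith

lemma key_mono {m p : ℕ} {F Q : Matrix (Fin m) (Fin m) ℝ}
    {H : Matrix (Fin p) (Fin m) ℝ} {R : Matrix (Fin p) (Fin p) ℝ}
    (hQ : Q.PosDef) (hR : R.PosDef) {P X : Matrix (Fin m) (Fin m) ℝ}
    (hP : P.PosDef) (hX : X.PosDef) (hXP : (X - P).PosSemidef) (b : Bool) :
    Real.log (kalmanUpdate F Q H R X b).det - Real.log X.det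
      ≤ Real.log (kalmanUpdate F Q H R P b).det - Real.log P.det := by
  set J := (if b then Hᵀ * (R⁻¹ * H) else 0 : Matrix (Fin m) (Fin m) ℝ) with hJdef
  have hJ : J.PosSemidef := psd_if hR b
  obtain ⟨L, hLpsd, hLL⟩ := psd_sqrt hJ
  have hLsym : Lᵀ = L := herm_tr hLpsd.1
  have dconv : ∀ Y : Matrix (Fin m) (Fin m) ℝ, Y.PosDef →
      (Y⁻¹ + J).det * Y.det = (1 + L * Y * L).det := by
    intro Y hY
    have hYu : IsUnit Y.det := isUnit_iff_ne_zero.mpr hY.det_pos.ne'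
    have e : (Y⁻¹ + J) * Y = 1 + J * Y := by
      rw [Matrix.add_mul, Matrix.nonsing_inv_mul _ hYu]
    rw [← det_mul, e, ← hLL, Matrix.mul_assoc, det_one_add_mul_comm]
  have hXJ : (X⁻¹ + J).PosDef := hX.inv.add_posSemidef hJ
  have hPJ : (P⁻¹ + J).PosDef := hP.inv.add_posSemidef hJ
  have hAX : (X⁻¹ + J + Fᵀ * Q⁻¹ * F).PosDef := hXJ.add_posSemidef (psd_G hQ)
  have hAP : (P⁻¹ + J + Fᵀ * Q⁻¹ * F).PosDef := hPJ.add_posSemidef (psd_G hQ)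
  have h1LP : ((1 : Matrix (Fin m) (Fin m) ℝ) + L * P * L).PosDef := by
    refine Matrix.PosDef.add_posSemidef Matrix.PosDef.one ?_
    have := psd_conj hP.posSemidef L
    rwa [hLsym] at this
  have i1 : (X⁻¹ + J + Fᵀ * Q⁻¹ * F).det ≤ (P⁻¹ + J + Fᵀ * Q⁻¹ * F).det := by
    refine det_mono hAX ?_
    have e : (P⁻¹ + J + Fᵀ * Q⁻¹ * F) - (X⁻¹ + J + Fᵀ * Q⁻¹ * F) = P⁻¹ - X⁻¹ := by abel
    rw [e]
    exact inv_antitone hP hX hXP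
  have i2 : ((1 : Matrix (Fin m) (Fin m) ℝ) + L * P * L).det ≤ (1 + L * X * L).det := by
    refine det_mono h1LP ?_
    have e : ((1 : Matrix (Fin m) (Fin m) ℝ) + L * X * L) - (1 + L * P * L)
        = L * (X - P) * L := by noncomm_ring
    rw [e]
    have := psd_conj hXP L
    rwa [hLsym] at this
  have cX : Real.log ((X⁻¹ + J).det) + Real.log X.det = Real.log ((1 + L * X * L).det) := by
    rw [← Real.log_mul hXJ.det_pos.ne' hX.det_pos.ne', dconv X hX]
  have cP : Real.log ((P⁻¹ + J).det) + Real.log P.det = Real.log ((1 + L * P * L).det) := by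
    rw [← Real.log_mul hPJ.det_pos.ne' hP.det_pos.ne', dconv P hP]
  have l1 : Real.log (X⁻¹ + J + Fᵀ * Q⁻¹ * F).det ≤ Real.log (P⁻¹ + J + Fᵀ * Q⁻¹ * F).det :=
    Real.log_le_log hAX.det_pos i1
  have l2 : Real.log ((1 : Matrix (Fin m) (Fin m) ℝ) + L * P * L).det
      ≤ Real.log (1 + L * X * L).det := Real.log_le_log h1LP.det_pos i2
  rw [logdet_kalman hQ hR hX b, logdet_kalman hQ hR hP b, ← hJdef]
  linarith

lemma detWeight_nonneg {L : ℕ} {pd : Fin L → ℝ} (hpd : ∀ l, pd l ∈ Set.Icc (0:ℝ) 1)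
    (b : Fin L → Bool) : 0 ≤ detWeight pd b :=
  Finset.prod_nonneg fun l _ => by
    by_cases h : b l
    · simp [h, (hpd l).1]
    · rw [if_neg h]
      have := (hpd l).2
      linarith

lemma sum_detWeight {L : ℕ} (pd : Fin L → ℝ) :
    ∑ b : Fin L → Bool, detWeight pd b = 1 := by
  unfold detWeight
  have h := Finset.prod_univ_sum (fun _ : Fin L => (Finset.univ : Finset Bool))
    (fun l y => if y then pd l else 1 - pd l)
  rw [Fintype.piFinset_univ] at h
  rw [← h]
  have h2 : ∀ l : Fin L, (∑ y : Bool, if y then pd l else 1 - pd l) = 1 := by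
    intro l
    rw [Fintype.sum_bool]
    simp
  rw [Finset.prod_congr rfl (fun l _ => h2 l), Finset.prod_const_one]

lemma stopCost_update_P_self {L m : ℕ} (a : Fin L) (α β : Fin L → ℝ)
    (P Pbar : Fin L → Matrix (Fin m) (Fin m) ℝ) (X : Matrix (Fin m) (Fin m) ℝ) :
    stopCost a α β (Function.update P a X) Pbar
      = stopCost a α β P Pbar + β a * (Real.log X.det - Real.log (P a).det) := by
  unfold stopCost
  rw [Function.update_self]
  rw [Finset.sum_congr rfl (fun l hl => by
    rw [Function.update_of_ne (Finset.mem_erase.mp hl).1])]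
  ring

lemma stopCost_update_P_ne {L m : ℕ} (a l0 : Fin L) (h : l0 ≠ a) (α β : Fin L → ℝ)
    (P Pbar : Fin L → Matrix (Fin m) (Fin m) ℝ) (X : Matrix (Fin m) (Fin m) ℝ) :
    stopCost a α β (Function.update P l0 X) Pbar
      = stopCost a α β P Pbar - β l0 * (Real.log X.det - Real.log (P l0).det) := by
  unfold stopCost
  rw [Function.update_of_ne (Ne.symm h)]
  have hmem : l0 ∈ Finset.univ.erase a := Finset.mem_erase.mpr ⟨h, Finset.mem_univ _⟩
  rw [← Finset.add_sum_erase _ _ hmem, ← Finset.add_sum_erase _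
    (fun l => (α l * Real.log (Pbar l).det - β l * Real.log ((P l).det))) hmem]
  rw [Finset.sum_congr rfl (fun l hl => by
    rw [Function.update_of_ne (Finset.mem_erase.mp hl).1])]
  rw [Function.update_self]
  ring

lemma stopCost_update_Pbar_self {L m : ℕ} (a : Fin L) (α β : Fin L → ℝ)
    (P Pbar : Fin L → Matrix (Fin m) (Fin m) ℝ) (X : Matrix (Fin m) (Fin m) ℝ) :
    stopCost a α β P (Function.update Pbar a X)
      = stopCost a α β P Pbar - α a * (Real.log X.det - Real.log (Pbar a).det) := by
  unfold stopCost
  rw [Function.update_self]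
  rw [Finset.sum_congr rfl (fun l hl => by
    rw [Function.update_of_ne (Finset.mem_erase.mp hl).1])]
  ring

lemma stopCost_update_Pbar_ne {L m : ℕ} (a l0 : Fin L) (h : l0 ≠ a) (α β : Fin L → ℝ)
    (P Pbar : Fin L → Matrix (Fin m) (Fin m) ℝ) (X : Matrix (Fin m) (Fin m) ℝ) :
    stopCost a α β P (Function.update Pbar l0 X)
      = stopCost a α β P Pbar + α l0 * (Real.log X.det - Real.log (Pbar l0).det) := by
  unfold stopCost
  rw [Function.update_of_ne (Ne.symm h)]
  have hmem : l0 ∈ Finset.univ.erase a := Finset.mem_erase.mpr ⟨h, Finset.mem_univ _⟩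
  rw [← Finset.add_sum_erase _ _ hmem, ← Finset.add_sum_erase _
    (fun l => (α l * Real.log (Pbar l).det - β l * Real.log ((P l).det))) hmem]
  rw [Finset.sum_congr rfl (fun l hl => by
    rw [Function.update_of_ne (Finset.mem_erase.mp hl).1])]
  rw [Function.update_self]
  ring

/-- The continuation cost `C(P, P̄)` is, with respect to the Loewner order and with
all other components held fixed: decreasing in `P_a`, decreasing in `P̄_l` for `l ≠ a`,
increasing in `P_l` for `l ≠ a`, and increasing in `P̄_a`. -/
theorem contCost_monotone {L m p : ℕ} (hL : 2 ≤ L) (a : Fin L)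
    (α β : Fin L → ℝ) (hα : ∀ l, 0 ≤ α l) (hβ : ∀ l, 0 ≤ β l) (c : ℝ)
    (F Q : Fin L → Matrix (Fin m) (Fin m) ℝ)
    (H : Fin L → Matrix (Fin p) (Fin m) ℝ)
    (R : Fin L → Matrix (Fin p) (Fin p) ℝ)
    (hQ : ∀ l, (Q l).PosDef) (hR : ∀ l, (R l).PosDef)
    (pd : Fin L → ℝ) (hpd : ∀ l, pd l ∈ Set.Icc (0 : ℝ) 1)
    (P Pbar : Fin L → Matrix (Fin m) (Fin m) ℝ)
    (hP : ∀ l, (P l).PosDef) (hPbar : ∀ l, (Pbar l).PosDef) :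
    (∀ X : Matrix (Fin m) (Fin m) ℝ, X.PosDef → (X - P a).PosSemidef →
        contCost a α β c F Q H R pd (Function.update P a X) Pbar
          ≤ contCost a α β c F Q H R pd P Pbar) ∧
    (∀ l : Fin L, l ≠ a → ∀ X : Matrix (Fin m) (Fin m) ℝ, X.PosDef →
        (X - Pbar l).PosSemidef →
        contCost a α β c F Q H R pd P (Function.update Pbar l X)
          ≤ contCost a α β c F Q H R pd P Pbar) ∧
    (∀ l : Fin L, l ≠ a → ∀ X : Matrix (Fin m) (Fin m) ℝ, X.PosDef →
        (X - P l).PosSemidef →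
        contCost a α β c F Q H R pd P Pbar
          ≤ contCost a α β c F Q H R pd (Function.update P l X) Pbar) ∧
    (∀ X : Matrix (Fin m) (Fin m) ℝ, X.PosDef → (X - Pbar a).PosSemidef →
        contCost a α β c F Q H R pd P Pbar
          ≤ contCost a α β c F Q H R pd P (Function.update Pbar a X)) := by
  have hWnn := detWeight_nonneg hpd
  have hWsum := sum_detWeight pd
  -- core inequality for the P-direction
  have core : ∀ (l0 : Fin L) (X : Matrix (Fin m) (Fin m) ℝ), X.PosDef →
      (X - P l0).PosSemidef →
      ∑ b : Fin L → Bool, detWeight pd b *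
        (β l0 * (Real.log (kalmanUpdate (F l0) (Q l0) (H l0) (R l0) X (b l0)).det
          - Real.log ((kalmanUpdate (F l0) (Q l0) (H l0) (R l0) (P l0) (b l0)).det)))
      ≤ β l0 * (Real.log X.det - Real.log (P l0).det) := by
    intro l0 X hXpos hXsub
    have hterm : ∀ b : Fin L → Bool,
        detWeight pd b * (β l0 * (Real.log (kalmanUpdate (F l0) (Q l0) (H l0) (R l0) X (b l0)).det
          - Real.log ((kalmanUpdate (F l0) (Q l0) (H l0) (R l0) (P l0) (b l0)).det)))
        ≤ detWeight pd b * (β l0 * (Real.log X.det - Real.log (P l0).det)) := by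
      intro b
      refine mul_le_mul_of_nonneg_left (mul_le_mul_of_nonneg_left ?_ (hβ l0)) (hWnn b)
      have := key_mono (F := F l0) (H := H l0) (hQ l0) (hR l0) (hP l0) hXpos hXsub (b l0)
      linarith
    calc ∑ b : Fin L → Bool, detWeight pd b *
          (β l0 * (Real.log (kalmanUpdate (F l0) (Q l0) (H l0) (R l0) X (b l0)).det
            - Real.log ((kalmanUpdate (F l0) (Q l0) (H l0) (R l0) (P l0) (b l0)).det)))
        ≤ ∑ b : Fin L → Bool, detWeight pd b *
            (β l0 * (Real.log X.det - Real.log (P l0).det)) :=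
          Finset.sum_le_sum (fun b _ => hterm b)
      _ = β l0 * (Real.log X.det - Real.log (P l0).det) := by
          rw [← Finset.sum_mul, hWsum, one_mul]
  -- lyap monotonicity
  have lyapkey : ∀ (l0 : Fin L) (X : Matrix (Fin m) (Fin m) ℝ), X.PosDef →
      (X - Pbar l0).PosSemidef →
      Real.log (lyapUpdate (F l0) (Q l0) X).det - Real.log X.det
        ≤ Real.log (lyapUpdate (F l0) (Q l0) (Pbar l0)).det - Real.log (Pbar l0).det := by
    intro l0 X hXpos hXsub
    have hk := key_mono (F := F l0) (H := H l0) (hQ l0) (hR l0) (hPbar l0) hXpos hXsub false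
    simp only [kalmanUpdate, Bool.false_eq_true, if_false, sub_zero] at hk
    simpa only [lyapUpdate] using hk
  refine ⟨?_, ?_, ?_, ?_⟩
  · -- decreasing in P a
    intro X hXpos hXsub
    have hfun : ∀ b : Fin L → Bool,
        (fun l => kalmanUpdate (F l) (Q l) (H l) (R l) (Function.update P a X l) (b l))
          = Function.update (fun l => kalmanUpdate (F l) (Q l) (H l) (R l) (P l) (b l)) a
              (kalmanUpdate (F a) (Q a) (H a) (R a) X (b a)) := by
      intro b; funext l
      by_cases hl : l = a
      · subst hl; simp
      · simp [Function.update_of_ne hl]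
    have hsum : ∀ b : Fin L → Bool,
        stopCost a α β (fun l => kalmanUpdate (F l) (Q l) (H l) (R l)
            (Function.update P a X l) (b l)) (fun l => lyapUpdate (F l) (Q l) (Pbar l))
          = stopCost a α β (fun l => kalmanUpdate (F l) (Q l) (H l) (R l) (P l) (b l))
              (fun l => lyapUpdate (F l) (Q l) (Pbar l))
            + β a * (Real.log (kalmanUpdate (F a) (Q a) (H a) (R a) X (b a)).det
                - Real.log ((kalmanUpdate (F a) (Q a) (H a) (R a) (P a) (b a)).det)) := by
      intro b
      rw [hfun b, stopCost_update_P_self]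
    unfold contCost
    rw [stopCost_update_P_self]
    simp only [hsum, mul_add, Finset.sum_add_distrib]
    have := core a X hXpos hXsub
    linarith
  · -- decreasing in Pbar l, l ≠ a
    intro l0 hne X hXpos hXsub
    have hfun : (fun l => lyapUpdate (F l) (Q l) (Function.update Pbar l0 X l))
        = Function.update (fun l => lyapUpdate (F l) (Q l) (Pbar l)) l0
            (lyapUpdate (F l0) (Q l0) X) := by
      funext l
      by_cases hl : l = l0
      · subst hl; simp
      · simp [Function.update_of_ne hl]
    have hsum : ∀ b : Fin L → Bool,
        stopCost a α β (fun l => kalmanUpdate (F l) (Q l) (H l) (R l) (P l) (b l))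
            (fun l => lyapUpdate (F l) (Q l) (Function.update Pbar l0 X l))
          = stopCost a α β (fun l => kalmanUpdate (F l) (Q l) (H l) (R l) (P l) (b l))
              (fun l => lyapUpdate (F l) (Q l) (Pbar l))
            + α l0 * (Real.log (lyapUpdate (F l0) (Q l0) X).det
                - Real.log ((lyapUpdate (F l0) (Q l0) (Pbar l0)).det)) := by
      intro b
      rw [hfun, stopCost_update_Pbar_ne a l0 hne]
    unfold contCost
    rw [stopCost_update_Pbar_ne a l0 hne]
    simp only [hsum, mul_add, Finset.sum_add_distrib]
    rw [← Finset.sum_mul, hWsum, one_mul]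
    have hk := lyapkey l0 X hXpos hXsub
    have hmul : α l0 * (Real.log (lyapUpdate (F l0) (Q l0) X).det
        - Real.log ((lyapUpdate (F l0) (Q l0) (Pbar l0)).det))
        ≤ α l0 * (Real.log X.det - Real.log (Pbar l0).det) :=
      mul_le_mul_of_nonneg_left (by linarith) (hα l0)
    linarith
  · -- increasing in P l, l ≠ a
    intro l0 hne X hXpos hXsub
    have hfun : ∀ b : Fin L → Bool,
        (fun l => kalmanUpdate (F l) (Q l) (H l) (R l) (Function.update P l0 X l) (b l))
          = Function.update (fun l => kalmanUpdate (F l) (Q l) (H l) (R l) (P l) (b l)) l0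
              (kalmanUpdate (F l0) (Q l0) (H l0) (R l0) X (b l0)) := by
      intro b; funext l
      by_cases hl : l = l0
      · subst hl; simp
      · simp [Function.update_of_ne hl]
    have hsum : ∀ b : Fin L → Bool,
        stopCost a α β (fun l => kalmanUpdate (F l) (Q l) (H l) (R l)
            (Function.update P l0 X l) (b l)) (fun l => lyapUpdate (F l) (Q l) (Pbar l))
          = stopCost a α β (fun l => kalmanUpdate (F l) (Q l) (H l) (R l) (P l) (b l))
              (fun l => lyapUpdate (F l) (Q l) (Pbar l))
            + (-(β l0 * (Real.log (kalmanUpdate (F l0) (Q l0) (H l0) (R l0) X (b l0)).det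
                - Real.log ((kalmanUpdate (F l0) (Q l0) (H l0) (R l0) (P l0) (b l0)).det)))) := by
      intro b
      rw [hfun b, stopCost_update_P_ne a l0 hne, sub_eq_add_neg]
    unfold contCost
    rw [stopCost_update_P_ne a l0 hne]
    simp only [hsum, mul_add, Finset.sum_add_distrib, mul_neg, Finset.sum_neg_distrib]
    have := core l0 X hXpos hXsub
    linarith
  · -- increasing in Pbar a
    intro X hXpos hXsub
    have hfun : (fun l => lyapUpdate (F l) (Q l) (Function.update Pbar a X l))
        = Function.update (fun l => lyapUpdate (F l) (Q l) (Pbar l)) a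
            (lyapUpdate (F a) (Q a) X) := by
      funext l
      by_cases hl : l = a
      · subst hl; simp
      · simp [Function.update_of_ne hl]
    have hsum : ∀ b : Fin L → Bool,
        stopCost a α β (fun l => kalmanUpdate (F l) (Q l) (H l) (R l) (P l) (b l))
            (fun l => lyapUpdate (F l) (Q l) (Function.update Pbar a X l))
          = stopCost a α β (fun l => kalmanUpdate (F l) (Q l) (H l) (R l) (P l) (b l))
              (fun l => lyapUpdate (F l) (Q l) (Pbar l))
            + (-(α a * (Real.log (lyapUpdate (F a) (Q a) X).det
                - Real.log ((lyapUpdate (F a) (Q a) (Pbar a)).det)))) := by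
      intro b
      rw [hfun, stopCost_update_Pbar_self, sub_eq_add_neg]
    unfold contCost
    rw [stopCost_update_Pbar_self]
    simp only [hsum, mul_add, Finset.sum_add_distrib]
    rw [← Finset.sum_mul, hWsum, one_mul]
    have hk := lyapkey a X hXpos hXsub
    have hmul : α a * (Real.log (lyapUpdate (F a) (Q a) X).det
        - Real.log ((lyapUpdate (F a) (Q a) (Pbar a)).det))
        ≤ α a * (Real.log X.det - Real.log (Pbar a).det) :=
      mul_le_mul_of_nonneg_left (by linarith) (hα a)
    linarith
end

section
/- In the setting of the value iteration below, define for each k ≥ 0 the decision policy μ_{k+1}(P, P̄) = 1 (stop) if C(P, P̄) + Σ_{b∈{0,1}^L} q(b) · V_k(T(P, P̄, b)) ≥ 0, and μ_{k+1}(P, P̄) = 2 (continue) otherwise. Then μ_{k+1} is a monotone policy: if μ_{k+1}(P, P̄) = 2 and the state (P', P̄') satisfies P'_a ⪰ P_a, P̄'_a ⪯ P̄_a, and for every l ≠ a, P'_l ⪯ P_l and P̄'_l ⪰ P̄_l (Loewner order), then μ_{k+1}(P', P̄') = 2. Equivalently, μ_{k+1} is increasing in P_a and in P̄_l (l ≠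 a), and decreasing in P̄_a and in P_l (l ≠ a). -/
open Matrix
set_option linter.unusedSectionVars false
set_option maxHeartbeats 1000000
variable {n : Type*} [Fintype n] [DecidableEq n]



/-- The value iteration: `V_0 = −C̄` and
`V_{k+1}(P, P̄) = min{0, C(P, P̄) + Σ_b q(b) V_k(T(P, P̄, b))}`. -/
noncomputable def valIter {L m p : ℕ} (a : Fin L) (α β : Fin L → ℝ) (c : ℝ)
    (F Q : Fin L → Matrix (Fin m) (Fin m) ℝ)
    (H : Fin L → Matrix (Fin p) (Fin m) ℝ)
    (R : Fin L → Matrix (Fin p) (Fin p) ℝ) (pd : Fin L → ℝ) :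
    ℕ → (Fin L → Matrix (Fin m) (Fin m) ℝ) → (Fin L → Matrix (Fin m) (Fin m) ℝ) → ℝ
  | 0, P, Pbar => - stopCost a α β P Pbar
  | k + 1, P, Pbar =>
      min 0
        (contCost a α β c F Q H R pd P Pbar
          + ∑ b : Fin L → Bool,
              detWeight pd b *
                valIter a α β c F Q H R pd k
                  (fun l => kalmanUpdate (F l) (Q l) (H l) (R l) (P l) (b l))
                  (fun l => lyapUpdate (F l) (Q l) (Pbar l)))

/-- The decision policy obtained after `k` value-iteration steps:
`μ_{k+1}(P, P̄) = 1` (stop) if `C(P, P̄) + Σ_b q(b) V_k(T(P, P̄, b)) ≥ 0`,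
and `μ_{k+1}(P, P̄) = 2` (continue) otherwise. -/
noncomputable def valIterPolicy {L m p : ℕ} (a : Fin L) (α β : Fin L → ℝ) (c : ℝ)
    (F Q : Fin L → Matrix (Fin m) (Fin m) ℝ)
    (H : Fin L → Matrix (Fin p) (Fin m) ℝ)
    (R : Fin L → Matrix (Fin p) (Fin p) ℝ) (pd : Fin L → ℝ) (k : ℕ)
    (P Pbar : Fin L → Matrix (Fin m) (Fin m) ℝ) : ℕ :=
  if 0 ≤ contCost a α β c F Q H R pd P Pbar
        + ∑ b : Fin L → Bool,
            detWeight pd b *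
              valIter a α β c F Q H R pd k
                (fun l => kalmanUpdate (F l) (Q l) (H l) (R l) (P l) (b l))
                (fun l => lyapUpdate (F l) (Q l) (Pbar l))
  then 1 else 2


namespace Matrix.PosSemidef
open scoped MatrixOrder

noncomputable def sqrt {A : Matrix n n ℝ} (_ : A.PosSemidef) : Matrix n n ℝ := CFC.sqrt A

lemma sqrt_mul_self {A : Matrix n n ℝ} (hA : A.PosSemidef) : hA.sqrt * hA.sqrt = A :=
  CFC.sqrt_mul_sqrt_self A hA.nonneg

lemma posSemidef_sqrt {A : Matrix n n ℝ} (hA : A.PosSemidef) : hA.sqrt.PosSemidef :=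
  (CFC.sqrt_nonneg A).posSemidef

end Matrix.PosSemidef

namespace KTool

lemma ct_eq {k l : Type*} (A : Matrix k l ℝ) : Aᴴ = Aᵀ :=
  Matrix.conjTranspose_eq_transpose_of_trivial A

lemma psd_congr {A : Matrix n n ℝ} (hA : A.PosSemidef) {m : Type*} [Fintype m]
    (B : Matrix m n ℝ) : (B * A * Bᵀ).PosSemidef := by
  simpa [ct_eq] using hA.mul_mul_conjTranspose_same B

lemma psd_symm {A : Matrix n n ℝ} (hA : A.PosSemidef) : Aᵀ = A :=
  (ct_eq A) ▸ hA.1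

lemma pd_of_psd_diff {A B : Matrix n n ℝ} (hA : A.PosDef) (h : (B - A).PosSemidef) :
    B.PosDef := by
  have := hA.add_posSemidef h
  simpa using this

lemma pd_unit {A : Matrix n n ℝ} (hA : A.PosDef) : IsUnit A.det :=
  isUnit_iff_ne_zero.mpr (ne_of_gt hA.det_pos)

lemma pd_congr {A : Matrix n n ℝ} (hA : A.PosDef) {B : Matrix n n ℝ}
    (hB : IsUnit B.det) : (B * A * Bᵀ).PosDef := by
  refine Matrix.posDef_iff_dotProduct_mulVec.mpr ⟨(psd_congr hA.posSemidef B).isHermitian, fun x hx => ?_⟩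
  have hxB : Bᵀ *ᵥ x ≠ 0 := by
    intro h
    apply hx
    have hBt : IsUnit Bᵀ.det := by rwa [Matrix.det_transpose]
    have := congrArg (fun v => (Bᵀ)⁻¹ *ᵥ v) h
    simpa [Matrix.mulVec_mulVec, Matrix.nonsing_inv_mul _ hBt] using this
  have h2 := hA.dotProduct_mulVec_pos hxB
  have key : x ⬝ᵥ ((B * A * Bᵀ) *ᵥ x) = (Bᵀ *ᵥ x) ⬝ᵥ (A *ᵥ (Bᵀ *ᵥ x)) := by
    rw [← Matrix.mulVec_mulVec, ← Matrix.mulVec_mulVec, Matrix.dotProduct_mulVec x B,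
      ← Matrix.transpose_transpose B, Matrix.vecMul_transpose, Matrix.transpose_transpose]
  simpa [star_trivial, key] using h2

lemma psd_det_nonneg {A : Matrix n n ℝ} (hA : A.PosSemidef) : 0 ≤ A.det := by
  rw [hA.1.det_eq_prod_eigenvalues]
  exact Finset.prod_nonneg fun i _ => by
    simpa using hA.eigenvalues_nonneg i

lemma det_one_add_psd {E : Matrix n n ℝ} (hE : E.PosSemidef) : 1 ≤ (1 + E).det := by
  have h := hE.1
  set U : Matrix n n ℝ := (IsHermitian.eigenvectorUnitary h : Matrix n n ℝ) with hU
  set D : Matrix n n ℝ := diagonal (RCLike.ofReal ∘ h.eigenvalues) with hD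
  have hUU : U * star U = 1 := (Matrix.mem_unitaryGroup_iff).mp (IsHermitian.eigenvectorUnitary h).2
  have hst : (1 : Matrix n n ℝ) + E = U * (1 + D) * star U := by
    have h1 : (1 : Matrix n n ℝ) = U * 1 * star U := by rw [Matrix.mul_one, hUU]
    calc (1 : Matrix n n ℝ) + E = U * 1 * star U + U * D * star U := by
          rw [← h1]; conv_lhs => rw [h.spectral_theorem]
          simp [U, D, Unitary.conjStarAlgAut_apply]
      _ = U * (1 + D) * star U := by rw [Matrix.mul_add, Matrix.add_mul]
  have hdetU : U.det * (star U).det = 1 := by rw [← Matrix.det_mul, hUU, Matrix.det_one]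
  have hdet : ((1 : Matrix n n ℝ) + E).det = ((1 : Matrix n n ℝ) + D).det := by
    rw [hst, Matrix.det_mul, Matrix.det_mul]
    calc U.det * (1 + D).det * (star U).det = (1 + D).det * (U.det * (star U).det) := by ring
      _ = (1 + D).det := by rw [hdetU, mul_one]
  rw [hdet]
  have h2 : (1 : Matrix n n ℝ) + D = diagonal (fun i => 1 + h.eigenvalues i) := by
    rw [hD, ← Matrix.diagonal_one, Matrix.diagonal_add]
    congr 1
  rw [h2, Matrix.det_diagonal]
  calc (1:ℝ) = ∏ _i : n, (1:ℝ) := by simp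
    _ ≤ ∏ i, (1 + h.eigenvalues i) :=
        Finset.prod_le_prod (by intros; norm_num)
          (fun i _ => le_add_of_nonneg_right (hE.eigenvalues_nonneg i))

lemma det_mono {A B : Matrix n n ℝ} (hA : A.PosDef) (h : (B - A).PosSemidef) :
    A.det ≤ B.det := by
  have hs := hA.posSemidef
  set s := hs.sqrt with hsdef
  have hss : s * s = A := hs.sqrt_mul_self
  have hsym : sᵀ = s := psd_symm hs.posSemidef_sqrt
  have hdet2 : s.det * s.det = A.det := by rw [← Matrix.det_mul, hss]
  have h0 : 0 < s.det := by
    rcases lt_or_eq_of_le (psd_det_nonneg hs.posSemidef_sqrt) with h' | h'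
    · exact h'
    · exfalso; rw [← h'] at hdet2; simp at hdet2; exact (ne_of_gt hA.det_pos) hdet2.symm
  have hsu : IsUnit s.det := isUnit_iff_ne_zero.mpr (ne_of_gt h0)
  have hE : (s⁻¹ * (B - A) * s⁻¹ᵀ).PosSemidef := psd_congr h _
  have hB : B = s * (1 + s⁻¹ * (B - A) * s⁻¹ᵀ) * s := by
    rw [Matrix.transpose_nonsing_inv, hsym]
    rw [Matrix.mul_add, Matrix.add_mul, Matrix.mul_one]
    rw [hss]
    have : s * (s⁻¹ * (B - A) * s⁻¹) * s = B - A := by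
      rw [← Matrix.mul_assoc, ← Matrix.mul_assoc, Matrix.mul_nonsing_inv _ hsu, Matrix.one_mul,
        Matrix.mul_assoc, Matrix.nonsing_inv_mul _ hsu, Matrix.mul_one]
    rw [this]; abel
  have h1 : 1 ≤ (1 + s⁻¹ * (B - A) * s⁻¹ᵀ).det := det_one_add_psd hE
  calc A.det = s.det * 1 * s.det := by rw [mul_one, ← Matrix.det_mul, hss]
    _ ≤ s.det * (1 + s⁻¹ * (B - A) * s⁻¹ᵀ).det * s.det := by nlinarith [mul_pos h0 h0]
    _ = B.det := by rw [← Matrix.det_mul, ← Matrix.det_mul, ← hB]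

lemma log_det_mono {A B : Matrix n n ℝ} (hA : A.PosDef) (h : (B - A).PosSemidef) :
    Real.log A.det ≤ Real.log B.det :=
  Real.log_le_log hA.det_pos (det_mono hA h)

lemma sqrt_det_unit {A : Matrix n n ℝ} (hA : A.PosDef) :
    IsUnit (hA.posSemidef.sqrt).det := by
  have hdet2 : (hA.posSemidef.sqrt).det * (hA.posSemidef.sqrt).det = A.det := by
    rw [← Matrix.det_mul, hA.posSemidef.sqrt_mul_self]
  refine isUnit_iff_ne_zero.mpr (fun h0 => ?_)
  rw [h0] at hdet2; simp at hdet2; exact (ne_of_gt hA.det_pos) hdet2.symm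

lemma inv_antitone {A B : Matrix n n ℝ} (hA : A.PosDef) (h : (B - A).PosSemidef) :
    (A⁻¹ - B⁻¹).PosSemidef := by
  have hB : B.PosDef := pd_of_psd_diff hA h
  set t := hA.posSemidef.sqrt with ht
  have htt : t * t = A := hA.posSemidef.sqrt_mul_self
  have htsym : tᵀ = t := psd_symm hA.posSemidef.posSemidef_sqrt
  have htu : IsUnit t.det := sqrt_det_unit hA
  have htiu : IsUnit t⁻¹.det := t.isUnit_nonsing_inv_det htu
  have htisym : t⁻¹ᵀ = t⁻¹ := by rw [Matrix.transpose_nonsing_inv, htsym]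
  set M := t⁻¹ * B * t⁻¹ with hM
  have hMpd : M.PosDef := by
    have := pd_congr hB htiu
    rwa [htisym] at this
  have hMu : IsUnit M.det := pd_unit hMpd
  have hM1 : (M - 1).PosSemidef := by
    have hc := psd_congr h t⁻¹
    rw [htisym] at hc
    have : t⁻¹ * (B - A) * t⁻¹ = M - 1 := by
      rw [Matrix.mul_sub, Matrix.sub_mul, hM]
      congr 1
      rw [← htt, ← Matrix.mul_assoc, Matrix.nonsing_inv_mul _ htu, Matrix.one_mul,
        Matrix.mul_nonsing_inv _ htu]
    rwa [this] at hc
  have hMinv : M⁻¹.PosDef := hMpd.inv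
  set r := hMinv.posSemidef.sqrt with hr
  have hrr : r * r = M⁻¹ := hMinv.posSemidef.sqrt_mul_self
  have hrsym : rᵀ = r := psd_symm hMinv.posSemidef.posSemidef_sqrt
  have hru : IsUnit r.det := sqrt_det_unit hMinv
  have hrMr : r * M * r = 1 := by
    have hMeq : M = r⁻¹ * r⁻¹ := by
      rw [← Matrix.mul_inv_rev, hrr, Matrix.nonsing_inv_nonsing_inv _ hMu]
    rw [hMeq, ← Matrix.mul_assoc, Matrix.mul_nonsing_inv _ hru, Matrix.one_mul,
      Matrix.nonsing_inv_mul _ hru]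
  have h1M : ((1 : Matrix n n ℝ) - M⁻¹).PosSemidef := by
    have hc := psd_congr hM1 r
    rw [hrsym] at hc
    have : r * (M - 1) * r = 1 - M⁻¹ := by
      rw [Matrix.mul_sub, Matrix.mul_one, Matrix.sub_mul, hrMr, hrr]
    rwa [this] at hc
  have hfin := psd_congr h1M t⁻¹
  rw [htisym] at hfin
  have hMi : M⁻¹ = t * (B⁻¹ * t) := by
    rw [hM, Matrix.mul_inv_rev, Matrix.mul_inv_rev,
      Matrix.nonsing_inv_nonsing_inv _ htu]
  have e1 : t⁻¹ * 1 * t⁻¹ = A⁻¹ := by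
    rw [Matrix.mul_one, ← Matrix.mul_inv_rev, htt]
  have e2 : t⁻¹ * M⁻¹ * t⁻¹ = B⁻¹ := by
    rw [hMi, Matrix.nonsing_inv_mul_cancel_left _ _ htu,
      Matrix.mul_assoc, Matrix.mul_nonsing_inv _ htu, Matrix.mul_one]
  have : t⁻¹ * (1 - M⁻¹) * t⁻¹ = A⁻¹ - B⁻¹ := by
    rw [Matrix.mul_sub, Matrix.sub_mul, e1, e2]
  rwa [this] at hfin


section Kalman
variable {m p : ℕ} {F Q : Matrix (Fin m) (Fin m) ℝ} {H : Matrix (Fin p) (Fin m) ℝ}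
  {R : Matrix (Fin p) (Fin p) ℝ}

/-- information matrix added on measurement -/
noncomputable def gMat (H : Matrix (Fin p) (Fin m) ℝ) (R : Matrix (Fin p) (Fin p) ℝ)
    (b : Bool) : Matrix (Fin m) (Fin m) ℝ :=
  if b then Hᵀ * R⁻¹ * H else 0

lemma gMat_psd (hR : R.PosDef) (b : Bool) : (gMat H R b).PosSemidef := by
  cases b
  · simpa [gMat] using (Matrix.PosSemidef.zero : (0 : Matrix (Fin m) (Fin m) ℝ).PosSemidef)
  · have := psd_congr hR.inv.posSemidef Hᵀ
    rwa [Matrix.transpose_transpose, show (gMat H R true) = Hᵀ * R⁻¹ * H from rfl] at *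

lemma info_core {P : Matrix (Fin m) (Fin m) ℝ} (hP : P.PosDef) (hR : R.PosDef) :
    (P⁻¹ + Hᵀ * R⁻¹ * H)⁻¹ = P - P * (Hᵀ * ((H * P * Hᵀ + R)⁻¹ * (H * P))) := by
  set S := H * P * Hᵀ + R with hSdef
  have hS : S.PosDef := Matrix.PosDef.posSemidef_add (psd_congr hP.posSemidef H) hR
  have hPu := pd_unit hP
  have hRu := pd_unit hR
  have hSu := pd_unit hS
  have hHPH : H * P * Hᵀ = S - R := by rw [hSdef, add_sub_cancel_right]
  apply Matrix.inv_eq_right_inv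
  have hstep : H * (P * (Hᵀ * (S⁻¹ * (H * P)))) = H * P - R * (S⁻¹ * (H * P)) := by
    have e : H * (P * (Hᵀ * (S⁻¹ * (H * P)))) = (H * P * Hᵀ) * (S⁻¹ * (H * P)) := by
      simp only [Matrix.mul_assoc]
    rw [e, hHPH, Matrix.sub_mul, Matrix.mul_nonsing_inv_cancel_left _ _ hSu]
  have hstep2 : R⁻¹ * (H * (P * (Hᵀ * (S⁻¹ * (H * P))))) = R⁻¹ * (H * P) - S⁻¹ * (H * P) := by
    rw [hstep, Matrix.mul_sub, Matrix.nonsing_inv_mul_cancel_left _ _ hRu]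
  have expand : (P⁻¹ + Hᵀ * R⁻¹ * H) * (P - P * (Hᵀ * (S⁻¹ * (H * P))))
      = P⁻¹ * P - P⁻¹ * (P * (Hᵀ * (S⁻¹ * (H * P))))
        + (Hᵀ * (R⁻¹ * (H * P)) - Hᵀ * (R⁻¹ * (H * (P * (Hᵀ * (S⁻¹ * (H * P))))))) := by
    simp only [Matrix.mul_sub, Matrix.add_mul, Matrix.mul_assoc]
    abel
  rw [expand, Matrix.nonsing_inv_mul _ hPu, Matrix.nonsing_inv_mul_cancel_left _ _ hPu, hstep2,
    Matrix.mul_sub]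
  abel

lemma info_form {P : Matrix (Fin m) (Fin m) ℝ} (hP : P.PosDef) (hR : R.PosDef) (b : Bool) :
    kalmanUpdate F Q H R P b = F * (P⁻¹ + gMat H R b)⁻¹ * Fᵀ + Q := by
  cases b
  · simp [kalmanUpdate, gMat, Matrix.nonsing_inv_nonsing_inv _ (pd_unit hP)]
  · have hcore := info_core (H := H) hP hR
    show _ = F * (P⁻¹ + Hᵀ * R⁻¹ * H)⁻¹ * Fᵀ + Q
    rw [hcore]
    simp only [kalmanUpdate, if_true, Matrix.mul_sub, Matrix.sub_mul, Matrix.mul_assoc]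
    abel

lemma upd_pd {P : Matrix (Fin m) (Fin m) ℝ} (hP : P.PosDef) (hQ : Q.PosDef)
    (hR : R.PosDef) (b : Bool) :
    (kalmanUpdate F Q H R P b).PosDef := by
  rw [info_form hP hR]
  have hW : ((P⁻¹ + gMat H R b)⁻¹).PosDef := (hP.inv.add_posSemidef (gMat_psd hR b)).inv
  exact Matrix.PosDef.posSemidef_add (psd_congr hW.posSemidef F) hQ

lemma upd_mono {P P' : Matrix (Fin m) (Fin m) ℝ} (hP : P.PosDef) (hP' : P'.PosDef)
    (hR : R.PosDef) (hle : (P' - P).PosSemidef) (b : Bool) :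
    (kalmanUpdate F Q H R P' b - kalmanUpdate F Q H R P b).PosSemidef := by
  rw [info_form hP hR, info_form hP' hR]
  set G := gMat H R b with hG
  have hK1' : (P'⁻¹ + G).PosDef := hP'.inv.add_posSemidef (gMat_psd hR b)
  have hinv1 : (P⁻¹ - P'⁻¹).PosSemidef := inv_antitone hP hle
  have hdiffK : ((P⁻¹ + G) - (P'⁻¹ + G)).PosSemidef := by
    have : (P⁻¹ + G) - (P'⁻¹ + G) = P⁻¹ - P'⁻¹ := by abel
    rw [this]; exact hinv1
  have hW : ((P'⁻¹ + G)⁻¹ - (P⁻¹ + G)⁻¹).PosSemidef := inv_antitone hK1' hdiffK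
  have e : F * (P'⁻¹ + G)⁻¹ * Fᵀ + Q - (F * (P⁻¹ + G)⁻¹ * Fᵀ + Q)
      = F * ((P'⁻¹ + G)⁻¹ - (P⁻¹ + G)⁻¹) * Fᵀ := by
    simp only [Matrix.mul_sub, Matrix.sub_mul]
    abel
  rw [e]
  exact psd_congr hW F

lemma upd_logdet {P : Matrix (Fin m) (Fin m) ℝ} (hP : P.PosDef) (hQ : Q.PosDef)
    (hR : R.PosDef) (b : Bool) :
    Real.log (kalmanUpdate F Q H R P b).det
      = Real.log Q.det + Real.log (Fᵀ * Q⁻¹ * F + (P⁻¹ + gMat H R b)).det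
        - Real.log (P⁻¹ + gMat H R b).det := by
  set G := gMat H R b with hGdef
  set K1 := P⁻¹ + G with hK1def
  have hK1 : K1.PosDef := hP.inv.add_posSemidef (gMat_psd hR b)
  set W := K1⁻¹ with hWdef
  have hW : W.PosDef := hK1.inv
  set S0 := Fᵀ * Q⁻¹ * F with hS0def
  have hS0 : S0.PosSemidef := by
    have := psd_congr hQ.inv.posSemidef Fᵀ
    rwa [Matrix.transpose_transpose] at this
  have hK2 : (S0 + K1).PosDef := Matrix.PosDef.posSemidef_add hS0 hK1
  have hQu := pd_unit hQ
  have hK1u := pd_unit hK1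
  have d1 : kalmanUpdate F Q H R P b = Q * (Q⁻¹ * (F * W * Fᵀ) + 1) := by
    rw [info_form hP hR b, Matrix.mul_add, Matrix.mul_nonsing_inv_cancel_left _ _ hQu,
      Matrix.mul_one, ← hGdef, ← hK1def, ← hWdef]
  have d2 : (Q⁻¹ * (F * W * Fᵀ) + 1).det = (W * S0 + 1).det := by
    have e1 : Q⁻¹ * (F * W * Fᵀ) = (Q⁻¹ * F) * (W * Fᵀ) := by simp only [Matrix.mul_assoc]
    have e2 : (W * Fᵀ) * (Q⁻¹ * F) = W * S0 := by simp only [hS0def, Matrix.mul_assoc]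
    rw [e1, Matrix.det_mul_add_one_comm, e2]
  have d3 : W * S0 + 1 = W * (S0 + K1) := by
    rw [Matrix.mul_add, hWdef, Matrix.nonsing_inv_mul _ hK1u]
  have d4 : (kalmanUpdate F Q H R P b).det = Q.det * ((K1.det)⁻¹ * (S0 + K1).det) := by
    rw [d1, Matrix.det_mul, d2, d3, Matrix.det_mul]
    congr 2
    rw [hWdef, Matrix.det_nonsing_inv, Ring.inverse_eq_inv']
  rw [d4]
  rw [Real.log_mul (ne_of_gt hQ.det_pos)
      (by exact mul_ne_zero (inv_ne_zero (ne_of_gt hK1.det_pos)) (ne_of_gt hK2.det_pos))]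
  rw [Real.log_mul (by exact inv_ne_zero (ne_of_gt hK1.det_pos)) (ne_of_gt hK2.det_pos)]
  rw [Real.log_inv]
  ring

lemma logdet_K1_P {P G : Matrix (Fin m) (Fin m) ℝ} (hP : P.PosDef) (hG : G.PosSemidef) :
    Real.log (P⁻¹ + G).det + Real.log P.det
      = Real.log (1 + hG.sqrt * P * hG.sqrt).det := by
  have hK1 : (P⁻¹ + G).PosDef := hP.inv.add_posSemidef hG
  have hdet : ((P⁻¹ + G) * P).det = (1 + hG.sqrt * P * hG.sqrt).det := by
    have e : (P⁻¹ + G) * P = 1 + G * P := by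
      rw [Matrix.add_mul, Matrix.nonsing_inv_mul _ (pd_unit hP)]
    rw [e]
    conv_lhs => rw [← hG.sqrt_mul_self]
    have e2 : (1 : Matrix (Fin m) (Fin m) ℝ) + (hG.sqrt * hG.sqrt) * P
        = 1 + hG.sqrt * (hG.sqrt * P) := by simp only [Matrix.mul_assoc]
    rw [e2, Matrix.det_one_add_mul_comm]
  rw [← Real.log_mul (ne_of_gt hK1.det_pos) (ne_of_gt hP.det_pos), ← Matrix.det_mul, hdet]

lemma upd_logdet_diff_anti {P P' : Matrix (Fin m) (Fin m) ℝ} (hP : P.PosDef)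
    (hP' : P'.PosDef) (hQ : Q.PosDef) (hR : R.PosDef) (hle : (P' - P).PosSemidef) (b : Bool) :
    Real.log (kalmanUpdate F Q H R P' b).det - Real.log P'.det
      ≤ Real.log (kalmanUpdate F Q H R P b).det - Real.log P.det := by
  rw [upd_logdet hP hQ hR b, upd_logdet hP' hQ hR b]
  set G := gMat H R b with hGdef
  have hG : G.PosSemidef := gMat_psd hR b
  set S0 := Fᵀ * Q⁻¹ * F with hS0def
  have hinv : (P⁻¹ - P'⁻¹).PosSemidef := inv_antitone hP hle
  have hK2' : (S0 + (P'⁻¹ + G)).PosDef := by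
    have hS0psd : S0.PosSemidef := by
      have := psd_congr hQ.inv.posSemidef Fᵀ
      rwa [Matrix.transpose_transpose] at this
    exact Matrix.PosDef.posSemidef_add hS0psd (hP'.inv.add_posSemidef hG)
  have ha : Real.log (S0 + (P'⁻¹ + G)).det ≤ Real.log (S0 + (P⁻¹ + G)).det := by
    apply log_det_mono hK2'
    have e : (S0 + (P⁻¹ + G)) - (S0 + (P'⁻¹ + G)) = P⁻¹ - P'⁻¹ := by abel
    rw [e]; exact hinv
  have hgsym : (hG.sqrt)ᵀ = hG.sqrt := psd_symm hG.posSemidef_sqrt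
  have hb : Real.log (P⁻¹ + G).det + Real.log P.det
      ≤ Real.log (P'⁻¹ + G).det + Real.log P'.det := by
    rw [logdet_K1_P hP hG, logdet_K1_P hP' hG]
    apply log_det_mono
    · exact Matrix.PosDef.add_posSemidef Matrix.PosDef.one
        (by have := psd_congr hP.posSemidef hG.sqrt; rwa [hgsym] at this)
    · have hc := psd_congr hle hG.sqrt
      rw [hgsym] at hc
      have e : hG.sqrt * (P' - P) * hG.sqrt
          = (1 + hG.sqrt * P' * hG.sqrt) - (1 + hG.sqrt * P * hG.sqrt) := by
        simp only [Matrix.mul_sub, Matrix.sub_mul]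
        abel
      rwa [e] at hc
  linarith

lemma kalman_false {P : Matrix (Fin m) (Fin m) ℝ} :
    kalmanUpdate F Q H R P false = lyapUpdate F Q P := by
  simp [kalmanUpdate, lyapUpdate]

end Kalman

section Structure
variable {L m p : ℕ}

lemma stopCost_mono (a : Fin L) {α β : Fin L → ℝ} (hα : ∀ l, 0 ≤ α l) (hβ : ∀ l, 0 ≤ β l)
    {P Pbar P' Pbar' : Fin L → Matrix (Fin m) (Fin m) ℝ}
    (hP : ∀ l, (P l).PosDef) (hPbar : ∀ l, (Pbar l).PosDef)
    (hP' : ∀ l, (P' l).PosDef) (hPbar' : ∀ l, (Pbar' l).PosDef)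
    (ha1 : (P' a - P a).PosSemidef) (ha2 : (Pbar a - Pbar' a).PosSemidef)
    (hl1 : ∀ l, l ≠ a → (P l - P' l).PosSemidef)
    (hl2 : ∀ l, l ≠ a → (Pbar' l - Pbar l).PosSemidef) :
    stopCost a α β P Pbar ≤ stopCost a α β P' Pbar' := by
  unfold stopCost
  have h1 : Real.log (Pbar' a).det ≤ Real.log (Pbar a).det := log_det_mono (hPbar' a) ha2
  have h2 : Real.log (P a).det ≤ Real.log (P' a).det := log_det_mono (hP a) ha1
  have hsum : ∑ l ∈ Finset.univ.erase a,
        (α l * Real.log ((Pbar l).det) - β l * Real.log ((P l).det))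
      ≤ ∑ l ∈ Finset.univ.erase a,
        (α l * Real.log ((Pbar' l).det) - β l * Real.log ((P' l).det)) := by
    apply Finset.sum_le_sum
    intro l hl
    have hne : l ≠ a := Finset.ne_of_mem_erase hl
    have g1 : Real.log (Pbar l).det ≤ Real.log (Pbar' l).det :=
      log_det_mono (hPbar l) (hl2 l hne)
    have g2 : Real.log (P' l).det ≤ Real.log (P l).det :=
      log_det_mono (hP' l) (hl1 l hne)
    have e1 := mul_le_mul_of_nonneg_left g1 (hα l)
    have e2 := mul_le_mul_of_nonneg_left g2 (hβ l)
    linarith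
  have e1 := mul_le_mul_of_nonneg_left h1 (hα a)
  have e2 := mul_le_mul_of_nonneg_left h2 (hβ a)
  linarith

lemma detWeight_nonneg {pd : Fin L → ℝ} (hpd : ∀ l, pd l ∈ Set.Icc (0:ℝ) 1)
    (b : Fin L → Bool) : 0 ≤ detWeight pd b := by
  refine Finset.prod_nonneg fun l _ => ?_
  rcases hpd l with ⟨h0, h1⟩
  by_cases hb : b l <;> simp [hb] <;> linarith

lemma detWeight_sum_one {pd : Fin L → ℝ} : ∑ b : Fin L → Bool, detWeight pd b = 1 := by
  unfold detWeight
  rw [← Fintype.piFinset_univ, ← Finset.prod_univ_sum (t := fun _ => (Finset.univ : Finset Bool))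
    (f := fun l c => if c = true then pd l else 1 - pd l)]
  have : ∀ l : Fin L, (∑ c : Bool, if c then pd l else 1 - pd l) = 1 := by
    intro l
    rw [Fintype.sum_bool]
    norm_num
  simp only [this, Finset.prod_const_one]

variable {L m p : ℕ}

lemma step_anti (a : Fin L) {α β : Fin L → ℝ} (hα : ∀ l, 0 ≤ α l) (hβ : ∀ l, 0 ≤ β l)
    (c : ℝ) (F Q : Fin L → Matrix (Fin m) (Fin m) ℝ) (H : Fin L → Matrix (Fin p) (Fin m) ℝ)
    (R : Fin L → Matrix (Fin p) (Fin p) ℝ) (hQ : ∀ l, (Q l).PosDef) (hR : ∀ l, (R l).PosDef)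
    (pd : Fin L → ℝ) (hpd : ∀ l, pd l ∈ Set.Icc (0:ℝ) 1)
    {P Pbar P' Pbar' : Fin L → Matrix (Fin m) (Fin m) ℝ}
    (hP : ∀ l, (P l).PosDef) (hPbar : ∀ l, (Pbar l).PosDef)
    (hP' : ∀ l, (P' l).PosDef) (hPbar' : ∀ l, (Pbar' l).PosDef)
    (ha1 : (P' a - P a).PosSemidef) (ha2 : (Pbar a - Pbar' a).PosSemidef)
    (hl1 : ∀ l, l ≠ a → (P l - P' l).PosSemidef)
    (hl2 : ∀ l, l ≠ a → (Pbar' l - Pbar l).PosSemidef)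
    (V V' : (Fin L → Bool) → ℝ) (hV : ∀ b, V' b ≤ V b) :
    contCost a α β c F Q H R pd P' Pbar' + ∑ b : Fin L → Bool, detWeight pd b * V' b
      ≤ contCost a α β c F Q H R pd P Pbar + ∑ b : Fin L → Bool, detWeight pd b * V b := by
  have hq0 := detWeight_nonneg hpd
  have hq1 : ∑ b : Fin L → Bool, detWeight pd b = 1 := detWeight_sum_one
  -- per-target decrease of the one-step log-det gain
  have hd : ∀ (l : Fin L) (X X' : Matrix (Fin m) (Fin m) ℝ), X.PosDef → X'.PosDef →
      (X' - X).PosSemidef → ∀ bb : Bool,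
      Real.log (kalmanUpdate (F l) (Q l) (H l) (R l) X' bb).det - Real.log X'.det
        ≤ Real.log (kalmanUpdate (F l) (Q l) (H l) (R l) X bb).det - Real.log X.det :=
    fun l X X' h1 h2 h3 bb => upd_logdet_diff_anti h1 h2 (hQ l) (hR l) h3 bb
  have hlyd : ∀ (l : Fin L) (X X' : Matrix (Fin m) (Fin m) ℝ), X.PosDef → X'.PosDef →
      (X' - X).PosSemidef →
      Real.log (lyapUpdate (F l) (Q l) X').det - Real.log X'.det
        ≤ Real.log (lyapUpdate (F l) (Q l) X).det - Real.log X.det := by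
    intro l X X' h1 h2 h3
    have := hd l X X' h1 h2 h3 false
    rwa [kalman_false (H := H l) (R := R l), kalman_false (H := H l) (R := R l)] at this
  have key : ∀ b : Fin L → Bool,
      stopCost a α β (fun l => kalmanUpdate (F l) (Q l) (H l) (R l) (P' l) (b l))
          (fun l => lyapUpdate (F l) (Q l) (Pbar' l))
        - stopCost a α β P' Pbar'
      ≤ stopCost a α β (fun l => kalmanUpdate (F l) (Q l) (H l) (R l) (P l) (b l))
          (fun l => lyapUpdate (F l) (Q l) (Pbar l))
        - stopCost a α β P Pbar := by
    intro b
    have t1 := hd a (P a) (P' a) (hP a) (hP' a) ha1 (b a)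
    have t2 := hlyd a (Pbar' a) (Pbar a) (hPbar' a) (hPbar a) ha2
    have A1 := mul_le_mul_of_nonneg_left t1 (hβ a)
    have A2 := mul_le_mul_of_nonneg_left t2 (hα a)
    have hS : ∑ l ∈ Finset.univ.erase a,
          ((α l * Real.log (lyapUpdate (F l) (Q l) (Pbar' l)).det
            - β l * Real.log (kalmanUpdate (F l) (Q l) (H l) (R l) (P' l) (b l)).det)
           - (α l * Real.log (Pbar' l).det - β l * Real.log (P' l).det))
        ≤ ∑ l ∈ Finset.univ.erase a,
          ((α l * Real.log (lyapUpdate (F l) (Q l) (Pbar l)).det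
            - β l * Real.log (kalmanUpdate (F l) (Q l) (H l) (R l) (P l) (b l)).det)
           - (α l * Real.log (Pbar l).det - β l * Real.log (P l).det)) := by
      apply Finset.sum_le_sum
      intro l hl
      have hne : l ≠ a := Finset.ne_of_mem_erase hl
      have u1 := hd l (P' l) (P l) (hP' l) (hP l) (hl1 l hne) (b l)
      have u2 := hlyd l (Pbar l) (Pbar' l) (hPbar l) (hPbar' l) (hl2 l hne)
      have B1 := mul_le_mul_of_nonneg_left u1 (hβ l)
      have B2 := mul_le_mul_of_nonneg_left u2 (hα l)
      linarith
    simp only [Finset.sum_sub_distrib] at hS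
    unfold stopCost
    dsimp only
    simp only [Finset.sum_sub_distrib]
    linarith
  have expand : ∀ (Pp Pbb : Fin L → Matrix (Fin m) (Fin m) ℝ) (VV : (Fin L → Bool) → ℝ),
      contCost a α β c F Q H R pd Pp Pbb + ∑ b : Fin L → Bool, detWeight pd b * VV b
        = c + ∑ b : Fin L → Bool, detWeight pd b *
            (stopCost a α β (fun l => kalmanUpdate (F l) (Q l) (H l) (R l) (Pp l) (b l))
               (fun l => lyapUpdate (F l) (Q l) (Pbb l))
             - stopCost a α β Pp Pbb + VV b) := by
    intro Pp Pbb VV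
    unfold contCost
    simp only [mul_add, mul_sub]
    rw [Finset.sum_add_distrib, Finset.sum_sub_distrib, ← Finset.sum_mul, hq1, one_mul]
    ring
  rw [expand P Pbar V, expand P' Pbar' V']
  refine add_le_add_right (Finset.sum_le_sum fun b _ => ?_) c
  exact mul_le_mul_of_nonneg_left (by linarith [key b, hV b]) (hq0 b)

lemma updated_posdef (F Q : Fin L → Matrix (Fin m) (Fin m) ℝ)
    (H : Fin L → Matrix (Fin p) (Fin m) ℝ) (R : Fin L → Matrix (Fin p) (Fin p) ℝ)
    (hQ : ∀ l, (Q l).PosDef) (hR : ∀ l, (R l).PosDef)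
    {P : Fin L → Matrix (Fin m) (Fin m) ℝ} (hP : ∀ l, (P l).PosDef) (b : Fin L → Bool) :
    (∀ l, (kalmanUpdate (F l) (Q l) (H l) (R l) (P l) (b l)).PosDef)
      ∧ (∀ l, (lyapUpdate (F l) (Q l) (P l)).PosDef) := by
  constructor
  · exact fun l => upd_pd (hP l) (hQ l) (hR l) (b l)
  · intro l
    have := upd_pd (F := F l) (H := H l) (R := R l) (hP l) (hQ l) (hR l) false
    rwa [kalman_false] at this

lemma valIter_anti (a : Fin L) {α β : Fin L → ℝ} (hα : ∀ l, 0 ≤ α l) (hβ : ∀ l, 0 ≤ β l)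
    (c : ℝ) (F Q : Fin L → Matrix (Fin m) (Fin m) ℝ) (H : Fin L → Matrix (Fin p) (Fin m) ℝ)
    (R : Fin L → Matrix (Fin p) (Fin p) ℝ) (hQ : ∀ l, (Q l).PosDef) (hR : ∀ l, (R l).PosDef)
    (pd : Fin L → ℝ) (hpd : ∀ l, pd l ∈ Set.Icc (0:ℝ) 1) :
    ∀ (k : ℕ) (P Pbar P' Pbar' : Fin L → Matrix (Fin m) (Fin m) ℝ),
      (∀ l, (P l).PosDef) → (∀ l, (Pbar l).PosDef) →
      (∀ l, (P' l).PosDef) → (∀ l, (Pbar' l).PosDef) →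
      (P' a - P a).PosSemidef → (Pbar a - Pbar' a).PosSemidef →
      (∀ l, l ≠ a → (P l - P' l).PosSemidef) →
      (∀ l, l ≠ a → (Pbar' l - Pbar l).PosSemidef) →
      valIter a α β c F Q H R pd k P' Pbar' ≤ valIter a α β c F Q H R pd k P Pbar := by
  intro k
  induction k with
  | zero =>
    intro P Pbar P' Pbar' hP hPbar hP' hPbar' ha1 ha2 hl1 hl2
    show -stopCost a α β P' Pbar' ≤ -stopCost a α β P Pbar
    have := stopCost_mono a hα hβ hP hPbar hP' hPbar' ha1 ha2 hl1 hl2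
    linarith
  | succ k ih =>
    intro P Pbar P' Pbar' hP hPbar hP' hPbar' ha1 ha2 hl1 hl2
    show min 0 _ ≤ min 0 _
    apply min_le_min le_rfl
    apply step_anti a hα hβ c F Q H R hQ hR pd hpd hP hPbar hP' hPbar' ha1 ha2 hl1 hl2
    intro b
    obtain ⟨hk1, hk2⟩ := updated_posdef F Q H R hQ hR hP b
    obtain ⟨hk1', hk2'⟩ := updated_posdef F Q H R hQ hR hP' b
    obtain ⟨-, hb2⟩ := updated_posdef F Q H R hQ hR hPbar b
    obtain ⟨-, hb2'⟩ := updated_posdef F Q H R hQ hR hPbar' b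
    apply ih
    · exact hk1
    · exact hb2
    · exact hk1'
    · exact hb2'
    · exact upd_mono (hP a) (hP' a) (hR a) ha1 (b a)
    · have := upd_mono (F := F a) (Q := Q a) (H := H a) (hPbar' a) (hPbar a) (hR a) ha2 false
      rwa [kalman_false, kalman_false] at this
    · intro l hl
      exact upd_mono (hP' l) (hP l) (hR l) (hl1 l hl) (b l)
    · intro l hl
      have := upd_mono (F := F l) (Q := Q l) (H := H l) (hPbar l) (hPbar' l) (hR l) (hl2 l hl) false
      rwa [kalman_false, kalman_false] at this

end Structure

end KTool

/-- The value-iteration policy `μ_{k+1}` is monotone: it is increasing in `P_a` and in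
`P̄_l` (`l ≠ a`) and decreasing in `P̄_a` and in `P_l` (`l ≠ a`) with respect to the
Loewner order.  Equivalently, if `μ_{k+1}(P, P̄) = 2` (continue) and `(P', P̄')`
satisfies `P'_a ⪰ P_a`, `P̄'_a ⪯ P̄_a`, and `P'_l ⪯ P_l`, `P̄'_l ⪰ P̄_l` for every
`l ≠ a`, then `μ_{k+1}(P', P̄') = 2`. -/
theorem valIterPolicy_monotone {L m p : ℕ} (hL : 2 ≤ L) (a : Fin L)
    (α β : Fin L → ℝ) (hα : ∀ l, 0 ≤ α l) (hβ : ∀ l, 0 ≤ β l) (c : ℝ)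
    (F Q : Fin L → Matrix (Fin m) (Fin m) ℝ)
    (H : Fin L → Matrix (Fin p) (Fin m) ℝ)
    (R : Fin L → Matrix (Fin p) (Fin p) ℝ)
    (hQ : ∀ l, (Q l).PosDef) (hR : ∀ l, (R l).PosDef)
    (pd : Fin L → ℝ) (hpd : ∀ l, pd l ∈ Set.Icc (0 : ℝ) 1)
    (k : ℕ)
    (P Pbar P' Pbar' : Fin L → Matrix (Fin m) (Fin m) ℝ)
    (hP : ∀ l, (P l).PosDef) (hPbar : ∀ l, (Pbar l).PosDef)
    (hP' : ∀ l, (P' l).PosDef) (hPbar' : ∀ l, (Pbar' l).PosDef)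
    (ha1 : (P' a - P a).PosSemidef) (ha2 : (Pbar a - Pbar' a).PosSemidef)
    (hl1 : ∀ l, l ≠ a → (P l - P' l).PosSemidef)
    (hl2 : ∀ l, l ≠ a → (Pbar' l - Pbar l).PosSemidef)
    (hcont : valIterPolicy a α β c F Q H R pd k P Pbar = 2) :
    valIterPolicy a α β c F Q H R pd k P' Pbar' = 2 := by
  have hle : contCost a α β c F Q H R pd P' Pbar'
        + ∑ b : Fin L → Bool,
            detWeight pd b *
              valIter a α β c F Q H R pd k
                (fun l => kalmanUpdate (F l) (Q l) (H l) (R l) (P' l) (b l))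
                (fun l => lyapUpdate (F l) (Q l) (Pbar' l))
      ≤ contCost a α β c F Q H R pd P Pbar
        + ∑ b : Fin L → Bool,
            detWeight pd b *
              valIter a α β c F Q H R pd k
                (fun l => kalmanUpdate (F l) (Q l) (H l) (R l) (P l) (b l))
                (fun l => lyapUpdate (F l) (Q l) (Pbar l)) := by
    apply KTool.step_anti a hα hβ c F Q H R hQ hR pd hpd hP hPbar hP' hPbar' ha1 ha2 hl1 hl2
    intro b
    obtain ⟨hk1, hk2⟩ := KTool.updated_posdef F Q H R hQ hR hP b
    obtain ⟨hk1', hk2'⟩ := KTool.updated_posdef F Q H R hQ hR hP' b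
    obtain ⟨-, hb2⟩ := KTool.updated_posdef F Q H R hQ hR hPbar b
    obtain ⟨-, hb2'⟩ := KTool.updated_posdef F Q H R hQ hR hPbar' b
    apply KTool.valIter_anti a hα hβ c F Q H R hQ hR pd hpd k
    · exact hk1
    · exact hb2
    · exact hk1'
    · exact hb2'
    · exact KTool.upd_mono (hP a) (hP' a) (hR a) ha1 (b a)
    · have := KTool.upd_mono (F := F a) (Q := Q a) (H := H a) (hPbar' a) (hPbar a) (hR a) ha2 false
      rwa [KTool.kalman_false, KTool.kalman_false] at this
    · intro l hl
      exact KTool.upd_mono (hP' l) (hP l) (hR l) (hl1 l hl) (b l)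
    · intro l hl
      have := KTool.upd_mono (F := F l) (Q := Q l) (H := H l) (hPbar l) (hPbar' l) (hR l)
        (hl2 l hl) false
      rwa [KTool.kalman_false, KTool.kalman_false] at this
  unfold valIterPolicy at hcont ⊢
  split_ifs at hcont with h
  · exact absurd hcont (by norm_num)
  · rw [if_neg (fun hc => h (le_trans hc hle))]
end
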